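/- arXiv:1709.06624 — 3 statements merged into one kernel-verified Lean document; each statement's English description precedes it below -/
import Mathlib

section
/- For each 1 ≤ j ≤ n, let λ_{ij} ∈ ℕ with λ_{ij} ≥ 1 for 1 ≤ i ≤ n, and let Δ_j = conv{0, λ_{1j}e_1, …, λ_{nj}e_n} ⊆ ℝ^n, where e_i is the i-th standard basis vector. Let J ⊆ {1,…,n} be nonempty and Δ_J = ∑_{j∈J} Δ_j (Minkowski sum). Then every facet F of Δ_J that is not contained in a coordinate hyperplane {x : x_i = 0} has an inner normal vector η with η_i < 0 for all 1 ≤ i ≤ n. -/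
open Pointwise Finset

private lemma dot_single {n : ℕ} (c : Fin n → ℝ) (k₁ : Fin n) (L : ℝ) :
    ∑ k, c k * (L • (Pi.single k₁ 1 : Fin n → ℝ)) k = L * c k₁ := by
  have : ∀ k : Fin n, c k * (L • (Pi.single k₁ 1 : Fin n → ℝ)) k
      = if k = k₁ then L * c k₁ else 0 := by
    intro k
    by_cases h : k = k₁ <;> simp [h, Pi.single_apply, mul_comm]
  rw [Finset.sum_congr rfl fun k _ => this k]
  simp

private lemma dot_linear {n : ℕ} (c : Fin n → ℝ) :
    IsLinearMap ℝ (fun y : Fin n → ℝ => ∑ i, c i * y i) := by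
  constructor
  · intro x y; simp [mul_add, Finset.sum_add_distrib]
  · intro a x; simp [Finset.mul_sum, smul_eq_mul]; ring_nf
    exact Finset.sum_congr rfl fun i _ => by ring

private lemma bound_lemma {n : ℕ} (lam : Fin n → Fin n → ℕ) (j : Fin n)
    (f : (Fin n → ℝ) → ℝ) (hf : IsLinearMap ℝ f) (a : ℝ)
    (h0 : a ≤ 0) (hk : ∀ k, a ≤ f ((lam k j : ℝ) • (Pi.single k 1 : Fin n → ℝ)))
    (y : Fin n → ℝ)
    (hy : y ∈ convexHull ℝ (insert (0 : Fin n → ℝ)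
      (Set.range fun i => (lam i j : ℝ) • (Pi.single i 1 : Fin n → ℝ)))) : a ≤ f y := by
  have hconv : Convex ℝ {w : Fin n → ℝ | a ≤ f w} := convex_halfSpace_ge hf a
  refine convexHull_min ?_ hconv hy
  rintro z (rfl | ⟨k, rfl⟩)
  · simpa [hf.map_zero] using h0
  · exact hk k

theorem stmt_8 {n : ℕ} (lam : Fin n → Fin n → ℕ) (hlam : ∀ i j, 1 ≤ lam i j)
    (Δ : Fin n → Set (Fin n → ℝ))
    (hΔ : ∀ j, Δ j = convexHull ℝ
      (insert (0 : Fin n → ℝ) (Set.range fun i => (lam i j : ℝ) • (Pi.single i 1 : Fin n → ℝ))))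
    (J : Finset (Fin n)) (hJ : J.Nonempty)
    (ΔJ : Set (Fin n → ℝ)) (hΔJ : ΔJ = ∑ j ∈ J, Δ j)
    (F : Set (Fin n → ℝ))
    -- `F` is a face of `ΔJ` cut out by a supporting hyperplane
    (hface : ∃ η₀ : Fin n → ℝ, ∃ c₀ : ℝ,
      F = {x ∈ ΔJ | ∑ i, η₀ i * x i = c₀} ∧ ∀ x ∈ ΔJ, c₀ ≤ ∑ i, η₀ i * x i)
    -- `F` is a facet: it has dimension `n - 1`
    (hdim : Module.finrank ℝ (affineSpan ℝ F).direction = n - 1)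
    -- `F` is not contained in any coordinate hyperplane
    (hcoord : ∀ i : Fin n, ¬ F ⊆ {x | x i = 0}) :
    ∃ η : Fin n → ℝ, ∃ c : ℝ,
      (∀ x ∈ F, ∑ i, η i * x i = c) ∧ (∀ x ∈ ΔJ, c ≤ ∑ i, η i * x i) ∧
      ∀ i, η i < 0 := by
  obtain ⟨η, c, hF, hmin⟩ := hface
  obtain ⟨j₀, hj₀⟩ := hJ
  have hn : 0 < n := j₀.pos
  have hlamR : ∀ i j, (0:ℝ) < (lam i j : ℝ) := fun i j => by exact_mod_cast hlam i j
  -- nonnegativity on each Δ j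
  have hΔpos : ∀ j, ∀ y ∈ Δ j, ∀ k, 0 ≤ y k := by
    intro j y hy k
    refine bound_lemma lam j (fun y => y k) ⟨fun a b => rfl, fun a b => rfl⟩ 0 le_rfl
      (fun k' => ?_) y (by rwa [hΔ j] at hy)
    by_cases h : k = k' <;> simp [h, Pi.single_apply]
  -- membership in the Minkowski sum
  have hmem : ∀ x, x ∈ ΔJ ↔
      ∃ g : Fin n → (Fin n → ℝ), (∀ j ∈ J, g j ∈ Δ j) ∧ ∑ j ∈ J, g j = x := by
    intro x
    rw [hΔJ, Set.mem_finset_sum]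
    constructor
    · rintro ⟨g, hg, h⟩; exact ⟨g, fun j hj => hg hj, h⟩
    · rintro ⟨g, hg, h⟩; exact ⟨g, fun {j} hj => hg j hj, h⟩
  have hpos : ∀ x ∈ ΔJ, ∀ k, 0 ≤ x k := by
    intro x hx k
    obtain ⟨g, hg, rfl⟩ := (hmem x).1 hx
    rw [Finset.sum_apply]
    exact Finset.sum_nonneg fun j hj => hΔpos j _ (hg j hj) k
  have hFne : F.Nonempty := by
    by_contra h
    exact hcoord ⟨0, hn⟩ (by simp [Set.not_nonempty_iff_eq_empty.mp h])
  -- Step 1: all coordinates of η are ≤ 0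
  have hle : ∀ i, η i ≤ 0 := by
    intro i
    by_contra h
    push_neg at h
    obtain ⟨x, hxF, hxi⟩ := Set.not_subset.mp (hcoord i)
    rw [hF] at hxF
    obtain ⟨hxΔ, hxc⟩ := hxF
    have hxi' : 0 < x i := lt_of_le_of_ne (hpos x hxΔ i) (Ne.symm hxi)
    set P : (Fin n → ℝ) → (Fin n → ℝ) :=
      fun v => v - v i • (Pi.single i 1 : Fin n → ℝ) with hP
    have hPapp : ∀ v (t : Fin n), P v t = if t = i then 0 else v t := by
      intro v t
      by_cases ht : t = i <;> simp [hP, Pi.single_apply, ht]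
    have hPlin : IsLinearMap ℝ P := by
      constructor <;> intro a b <;> funext t <;>
        simp only [hPapp, Pi.add_apply, Pi.smul_apply, smul_eq_mul] <;>
        by_cases ht : t = i <;> simp [ht]
    have hPΔ : ∀ j, ∀ y ∈ Δ j, P y ∈ Δ j := by
      intro j y hy
      rw [hΔ j] at hy ⊢
      have hconv : Convex ℝ (P ⁻¹' convexHull ℝ (insert (0 : Fin n → ℝ)
          (Set.range fun i => (lam i j : ℝ) • (Pi.single i 1 : Fin n → ℝ)))) :=
        (convex_convexHull ℝ _).is_linear_preimage hPlin
      refine convexHull_min ?_ hconv hy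
      rintro z (rfl | ⟨k, rfl⟩) <;> rw [Set.mem_preimage]
      · rw [hPlin.map_zero]
        exact subset_convexHull ℝ _ (Set.mem_insert _ _)
      · by_cases hk : k = i
        · subst hk
          have hP0 : P ((lam k j : ℝ) • (Pi.single k 1 : Fin n → ℝ)) = 0 := by
            funext t
            rw [hPapp]
            by_cases ht : t = k <;> simp [ht, Pi.single_apply]
          rw [hP0]
          exact subset_convexHull ℝ _ (Set.mem_insert _ _)
        · have hPid : P ((lam k j : ℝ) • (Pi.single k 1 : Fin n → ℝ))
              = (lam k j : ℝ) • (Pi.single k 1 : Fin n → ℝ) := by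
            funext t
            rw [hPapp]
            by_cases ht : t = i <;> simp [ht, Pi.single_apply, Ne.symm hk]
          rw [hPid]
          exact subset_convexHull ℝ _ (Set.mem_insert_of_mem _ ⟨k, rfl⟩)
    obtain ⟨g, hg, hgx⟩ := (hmem x).1 hxΔ
    have hPxΔ : P x ∈ ΔJ := by
      refine (hmem (P x)).2 ⟨fun j => P (g j), fun j hj => hPΔ j _ (hg j hj), ?_⟩
      rw [← hgx]
      exact (map_sum (IsLinearMap.mk' P hPlin) g J).symm
    have hPx : ∑ k, η k * P x k = (∑ k, η k * x k) - η i * x i := by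
      have hterm : ∀ k : Fin n, η k * P x k
          = η k * x k - (if k = i then η i * x i else 0) := by
        intro k
        rw [hPapp]
        by_cases hk : k = i <;> simp [hk]
      rw [Finset.sum_congr rfl fun k _ => hterm k, Finset.sum_sub_distrib]
      simp
    have hcon := hmin (P x) hPxΔ
    rw [hPx, hxc] at hcon
    nlinarith
  -- Step 2: η ≠ 0
  have hne : η ≠ 0 := by
    rintro rfl
    have hc0 : c = 0 := by
      obtain ⟨x, hx⟩ := hFne
      rw [hF] at hx
      simpa using hx.2.symm
    have hFeq : F = ΔJ := by rw [hF, hc0]; ext x; simp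
    have h0 : (0 : Fin n → ℝ) ∈ ΔJ := by
      refine (hmem 0).2 ⟨fun _ => 0, fun j hj => ?_, by simp⟩
      rw [hΔ j]; exact subset_convexHull ℝ _ (Set.mem_insert _ _)
    have hv : ∀ i : Fin n, ((lam i j₀ : ℝ) • (Pi.single i 1 : Fin n → ℝ)) ∈ ΔJ := by
      intro i
      refine (hmem _).2 ⟨fun j => if j = j₀ then (lam i j₀ : ℝ) • (Pi.single i 1 : Fin n → ℝ)
        else 0, fun j hj => ?_, ?_⟩
      · by_cases hjj : j = j₀
        · subst hjj; rw [hΔ j]; simp only [if_pos rfl]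
          exact subset_convexHull ℝ _ (Set.mem_insert_of_mem _ ⟨i, rfl⟩)
        · rw [hΔ j]; simp only [if_neg hjj]
          exact subset_convexHull ℝ _ (Set.mem_insert _ _)
      · rw [Finset.sum_ite_eq' J j₀, if_pos hj₀]
    have hdir : ∀ i : Fin n, (Pi.single i 1 : Fin n → ℝ) ∈ (affineSpan ℝ F).direction := by
      intro i
      have h1 : ((lam i j₀ : ℝ) • (Pi.single i 1 : Fin n → ℝ)) -ᵥ 0
          ∈ (affineSpan ℝ F).direction :=
        AffineSubspace.vsub_mem_direction
          (subset_affineSpan ℝ F (hFeq ▸ hv i)) (subset_affineSpan ℝ F (hFeq ▸ h0))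
      rw [vsub_eq_sub, sub_zero] at h1
      have h2 := (affineSpan ℝ F).direction.smul_mem ((lam i j₀ : ℝ))⁻¹ h1
      rwa [smul_smul, inv_mul_cancel₀ (hlamR i j₀).ne', one_smul] at h2
    have htop : (affineSpan ℝ F).direction = ⊤ := by
      rw [eq_top_iff]
      intro v _
      have hv' : v = ∑ i, v i • (Pi.single i 1 : Fin n → ℝ) := by
        funext k
        rw [Finset.sum_apply]
        have hterm : ∀ i : Fin n, (v i • (Pi.single i 1 : Fin n → ℝ)) k
            = if i = k then v k else 0 := by
          intro i; by_cases h : i = k <;> simp [h, Pi.single_apply]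
        rw [Finset.sum_congr rfl fun i _ => hterm i]
        simp
      rw [hv']
      exact Submodule.sum_mem _ fun i _ => Submodule.smul_mem _ _ (hdir i)
    rw [htop, finrank_top] at hdim
    rw [Module.finrank_pi] at hdim
    simp at hdim
    omega
  -- Step 3: all coordinates of η are < 0
  have hη : ∀ i, η i < 0 := by
    intro i
    rcases lt_or_eq_of_le (hle i) with h | h
    · exact h
    · exfalso
      obtain ⟨k₀, hk₀⟩ : ∃ k, η k < 0 := by
        by_contra hno
        push_neg at hno
        exact hne (funext fun k => le_antisymm (hle k) (hno k))
      set m : Fin n → ℝ := fun j => Finset.univ.inf' ⟨i, mem_univ i⟩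
        (fun k => (lam k j : ℝ) * η k) with hm
      have hmle : ∀ j k, m j ≤ (lam k j : ℝ) * η k := fun j k =>
        Finset.inf'_le _ (mem_univ k)
      have hmneg : ∀ j, m j < 0 := fun j =>
        lt_of_le_of_lt (hmle j k₀) (mul_neg_of_pos_of_neg (hlamR k₀ j) hk₀)
      have hbound : ∀ j, ∀ y ∈ Δ j, m j ≤ ∑ k, η k * y k := by
        intro j y hy
        refine bound_lemma lam j _ (dot_linear η) _ (hmneg j).le (fun k => ?_) y
          (by rwa [hΔ j] at hy)
        rw [dot_single]
        exact hmle j k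
      have hz : ∀ j, ∃ zz ∈ Δ j, ∑ k, η k * zz k = m j := by
        intro j
        obtain ⟨k₁, _, hk₁⟩ := Finset.exists_mem_eq_inf' (⟨i, mem_univ i⟩ :
          (Finset.univ : Finset (Fin n)).Nonempty) (fun k => (lam k j : ℝ) * η k)
        refine ⟨(lam k₁ j : ℝ) • (Pi.single k₁ 1 : Fin n → ℝ), ?_, ?_⟩
        · rw [hΔ j]; exact subset_convexHull ℝ _ (Set.mem_insert_of_mem _ ⟨k₁, rfl⟩)
        · rw [dot_single]; exact hk₁.symm
      choose z hzΔ hzval using hz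
      have hzJ : (∑ j ∈ J, z j) ∈ ΔJ := (hmem _).2 ⟨z, fun j hj => hzΔ j, rfl⟩
      have hswap : ∀ w : Fin n → (Fin n → ℝ),
          ∑ k, η k * (∑ j ∈ J, w j) k = ∑ j ∈ J, ∑ k, η k * w j k := by
        intro w
        rw [Finset.sum_comm]
        refine Finset.sum_congr rfl fun k _ => ?_
        rw [Finset.sum_apply, Finset.mul_sum]
      have hcm : c ≤ ∑ j ∈ J, m j := by
        have h1 := hmin _ hzJ
        rw [hswap z] at h1
        calc c ≤ ∑ j ∈ J, ∑ k, η k * z j k := h1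
          _ = ∑ j ∈ J, m j := Finset.sum_congr rfl fun j _ => hzval j
      obtain ⟨x, hxF, hxi⟩ := Set.not_subset.mp (hcoord i)
      rw [hF] at hxF
      obtain ⟨hxΔ, hxc⟩ := hxF
      obtain ⟨g, hg, hgx⟩ := (hmem x).1 hxΔ
      have hsum : ∑ j ∈ J, (∑ k, η k * g j k) = c := by
        rw [← hxc, ← hgx, hswap g]
      have h1 : ∀ j ∈ J, m j ≤ ∑ k, η k * g j k := fun j hj => hbound j _ (hg j hj)
      have hattain : ∀ j ∈ J, ∑ k, η k * g j k = m j := by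
        intro j hj
        by_contra hne'
        have h2 : ∑ j ∈ J, m j < ∑ j ∈ J, (∑ k, η k * g j k) :=
          Finset.sum_lt_sum h1 ⟨j, hj, lt_of_le_of_ne (h1 j hj) (Ne.symm hne')⟩
        linarith
      have hgi : ∀ j ∈ J, g j i = 0 := by
        intro j hj
        have hlij := hlamR i j
        have hfb : ∀ y ∈ Δ j, m j ≤ (∑ k, η k * y k) + (m j / (lam i j : ℝ)) * y i := by
          intro y hy
          have hflin : IsLinearMap ℝ
              (fun y : Fin n → ℝ => (∑ k, η k * y k) + (m j / (lam i j : ℝ)) * y i) := by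
            constructor
            · intro a b
              simp only [Pi.add_apply]
              rw [Finset.sum_congr rfl fun k (_ : k ∈ Finset.univ) =>
                (by ring : η k * (a k + b k) = η k * a k + η k * b k),
                Finset.sum_add_distrib]
              ring
            · intro a b
              simp only [Pi.smul_apply, smul_eq_mul]
              rw [Finset.sum_congr rfl fun k (_ : k ∈ Finset.univ) =>
                (by ring : η k * (a * b k) = a * (η k * b k)), ← Finset.mul_sum]
              ring
          refine bound_lemma lam j _ hflin _ (hmneg j).le (fun k => ?_) y
            (by rwa [hΔ j] at hy)
          rw [dot_single]
          by_cases hk : k = i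
          · subst hk
            have hsingle : ((lam k j : ℝ) • (Pi.single k 1 : Fin n → ℝ)) k = (lam k j : ℝ) := by
              simp
            rw [hsingle, h, div_mul_cancel₀ _ hlij.ne']
            simp
          · have hsingle : ((lam k j : ℝ) • (Pi.single k 1 : Fin n → ℝ)) i = 0 := by
              simp [Pi.single_apply, Ne.symm hk]
            rw [hsingle, mul_zero, add_zero]
            exact hmle j k
        have h2 := hfb (g j) (hg j hj)
        rw [hattain j hj] at h2
        have h3 : g j i ≤ 0 := by
          have h4 : 0 ≤ (m j / (lam i j : ℝ)) * g j i := by linarith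
          have h5 : m j / (lam i j : ℝ) < 0 := div_neg_of_neg_of_pos (hmneg j) hlij
          nlinarith
        exact le_antisymm h3 (hΔpos j _ (hg j hj) i)
      apply hxi
      show x i = 0
      rw [← hgx, Finset.sum_apply]
      exact Finset.sum_eq_zero hgi
  refine ⟨η, c, fun x hx => ?_, hmin, hη⟩
  rw [hF] at hx
  exact hx.2
end

section
/- Let A ⊆ ℝ^n be a finite set with 0 ∉ conv(A), suppose conv(A) contains a point μ_i e_i with μ_i > 0 on each coordinate axis, and let Δ = conv{0, λ_1 e_1, …, λ_n e_n} where λ_i = min { μ ∈ ℕ : μ e_i ∈ conv(A) }. Let Q = conv(A) and Q⁰ = conv(A ∪ {0}). Then Q⁰ = Q ∪ Δ'; more precisely, for any point p ∈ Q⁰ with p ∉ Δ, we have p ∈ Q. -/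
lemma aux_pi_sum {n : ℕ} (x : Fin n → ℝ) :
    x = ∑ i, x i • (Pi.single i 1 : Fin n → ℝ) := by
  funext j
  rw [Finset.sum_apply]
  simp [Pi.single_apply]

theorem stmt_10 {n : ℕ} (A : Set (Fin n → ℝ)) (hAfin : A.Finite)
    (hAint : ∀ a ∈ A, ∀ i, ∃ k : ℕ, a i = (k : ℝ))
    (Q : Set (Fin n → ℝ)) (hQ : Q = convexHull ℝ A)
    (h0 : (0 : Fin n → ℝ) ∉ Q)
    (haxis : ∀ i : Fin n, ∃ μ : ℝ, 0 < μ ∧ μ • (Pi.single i 1 : Fin n → ℝ) ∈ Q)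
    (lam : Fin n → ℕ)
    (hlam : ∀ i, IsLeast {μ : ℕ | (μ : ℝ) • (Pi.single i 1 : Fin n → ℝ) ∈ Q} (lam i))
    (Δ : Set (Fin n → ℝ))
    (hΔ : Δ = convexHull ℝ
      (insert (0 : Fin n → ℝ) (Set.range fun i => (lam i : ℝ) • (Pi.single i 1 : Fin n → ℝ)))) :
    ∀ p ∈ convexHull ℝ (A ∪ {0}), p ∉ Δ → p ∈ Q := by
  intro p hp hpΔ
  have hQconv : Convex ℝ Q := hQ ▸ convex_convexHull ℝ A
  have hΔconv : Convex ℝ Δ := hΔ ▸ convex_convexHull ℝ _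
  have h0Δ : (0 : Fin n → ℝ) ∈ Δ := hΔ ▸ subset_convexHull ℝ _ (Set.mem_insert _ _)
  have hlampos : ∀ i, 0 < (lam i : ℝ) := by
    intro i
    have hmem := (hlam i).1
    rcases Nat.eq_zero_or_pos (lam i) with h | h
    · exfalso; apply h0; simpa [h] using hmem
    · exact_mod_cast h
  have hQnonneg : ∀ x ∈ Q, ∀ i, 0 ≤ x i := by
    have hconv : Convex ℝ {y : Fin n → ℝ | ∀ i, 0 ≤ y i} := by
      intro a ha b hb s t hs ht hst
      intro i
      have : 0 ≤ s * a i + t * b i :=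
        add_nonneg (mul_nonneg hs (ha i)) (mul_nonneg ht (hb i))
      simpa using this
    intro x hx i
    rw [hQ] at hx
    have hsub : A ⊆ {y : Fin n → ℝ | ∀ i, 0 ≤ y i} := by
      intro a ha j
      obtain ⟨k, hk⟩ := hAint a ha j
      rw [hk]; positivity
    exact convexHull_min hsub hconv hx i
  -- membership criterion for the simplex Δ
  have hsimplex : ∀ x : Fin n → ℝ, (∀ i, 0 ≤ x i) → (∑ i, x i / lam i) ≤ 1 → x ∈ Δ := by
    intro x hx hsum
    set c : Fin n → ℝ := fun i => x i / lam i with hc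
    have hc0 : ∀ i, 0 ≤ c i := fun i => div_nonneg (hx i) (hlampos i).le
    set w : Option (Fin n) → ℝ := fun o => o.elim (1 - ∑ i, c i) c with hw
    set z : Option (Fin n) → (Fin n → ℝ) :=
      fun o => o.elim 0 (fun i => (lam i : ℝ) • (Pi.single i 1 : Fin n → ℝ)) with hz
    have hzΔ : ∀ o, z o ∈ Δ := by
      intro o
      cases o with
      | none => exact h0Δ
      | some i =>
        rw [hΔ]
        exact subset_convexHull ℝ _ (Set.mem_insert_iff.2 (Or.inr ⟨i, rfl⟩))
    have hw0 : ∀ o ∈ (Finset.univ : Finset (Option (Fin n))), 0 ≤ w o := by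
      intro o _
      cases o with
      | none => simpa [hw] using sub_nonneg.2 hsum
      | some i => exact hc0 i
    have hwsum : ∑ o, w o = 1 := by
      rw [Fintype.sum_option]; simp [hw]
    have hmem := hΔconv.sum_mem hw0 hwsum (fun o _ => hzΔ o)
    have hxeq : x = ∑ o, w o • z o := by
      rw [Fintype.sum_option]
      simp only [hw, hz, Option.elim]
      rw [smul_zero, zero_add]
      calc x = ∑ i, x i • (Pi.single i 1 : Fin n → ℝ) := aux_pi_sum x
      _ = ∑ i, c i • ((lam i : ℝ) • (Pi.single i 1 : Fin n → ℝ)) := by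
          refine Finset.sum_congr rfl fun i _ => ?_
          rw [smul_smul, hc]
          congr 1
          exact (div_mul_cancel₀ (x i) (hlampos i).ne').symm
    rw [hxeq]; exact hmem
  -- decompose p as b • q with q ∈ Q
  rcases A.eq_empty_or_nonempty with hAe | hAne
  · exfalso
    apply hpΔ
    have : p = 0 := by
      rw [hAe] at hp
      simpa using hp
    rw [this]; exact h0Δ
  have hins : A ∪ {0} = insert (0 : Fin n → ℝ) A := Set.union_singleton
  rw [hins, convexHull_insert hAne, mem_convexJoin] at hp
  obtain ⟨x0, hx0, q, hqQ', hpseg⟩ := hp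
  rw [Set.mem_singleton_iff] at hx0
  subst hx0
  have hqQ : q ∈ Q := by rw [hQ]; exact hqQ'
  obtain ⟨a, b, ha, hb, hab, hpe⟩ := hpseg
  have hpq : p = b • q := by rw [← hpe]; simp
  have hb1 : b ≤ 1 := by linarith
  have hpnn : ∀ i, 0 ≤ p i := by
    intro i
    rw [hpq]
    exact mul_nonneg hb (hQnonneg q hqQ i)
  -- p ∉ Δ forces sum > 1
  have hs : 1 < ∑ i, p i / lam i := by
    by_contra h
    push_neg at h
    exact hpΔ (hsimplex p hpnn h)
  set s : ℝ := ∑ i, p i / lam i with hsdef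
  have hs0 : 0 < s := lt_trans one_pos hs
  -- r := s⁻¹ • p belongs to Q
  set r : Fin n → ℝ := s⁻¹ • p with hr
  have hrQ : r ∈ Q := by
    set w : Fin n → ℝ := fun i => p i / (s * lam i) with hwdef
    have hw0 : ∀ i ∈ (Finset.univ : Finset (Fin n)), 0 ≤ w i := by
      intro i _
      exact div_nonneg (hpnn i) (mul_nonneg hs0.le (hlampos i).le)
    have hwsum : ∑ i, w i = 1 := by
      have : ∀ i, w i = s⁻¹ * (p i / lam i) := by
        intro i
        rw [hwdef]
        field_simp
      rw [Finset.sum_congr rfl (fun i _ => this i), ← Finset.mul_sum, ← hsdef,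
        inv_mul_cancel₀ hs0.ne']
    have hmem := hQconv.sum_mem hw0 hwsum
      (fun i _ => ((hlam i).1 : ((lam i : ℝ) • (Pi.single i 1 : Fin n → ℝ)) ∈ Q))
    have hreq : r = ∑ i, w i • ((lam i : ℝ) • (Pi.single i 1 : Fin n → ℝ)) := by
      calc r = ∑ i, r i • (Pi.single i 1 : Fin n → ℝ) := aux_pi_sum r
      _ = ∑ i, w i • ((lam i : ℝ) • (Pi.single i 1 : Fin n → ℝ)) := by
          refine Finset.sum_congr rfl fun i _ => ?_
          rw [smul_smul]
          congr 1
          rw [hwdef, hr]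
          simp only [Pi.smul_apply, smul_eq_mul]
          field_simp [hs0.ne', (hlampos i).ne']
    rw [hreq]; exact hmem
  -- p is a convex combination of r and q
  have hsb : 0 < s - b := by linarith
  set a' : ℝ := s * (1 - b) / (s - b) with ha'
  set b' : ℝ := b * (s - 1) / (s - b) with hb'
  have ha'0 : 0 ≤ a' := by
    apply div_nonneg _ hsb.le
    have : 0 ≤ 1 - b := by linarith
    positivity
  have hb'0 : 0 ≤ b' := by
    apply div_nonneg _ hsb.le
    have : 0 ≤ s - 1 := by linarith
    positivity
  have hab' : a' + b' = 1 := by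
    rw [ha', hb']
    field_simp
    ring
  have hpeq : p = a' • r + b' • q := by
    rw [hr, hpq, smul_smul, smul_smul, ← add_smul]
    congr 1
    rw [ha', hb']
    have h1 : s ≠ 0 := hs0.ne'
    have h2 : s - b ≠ 0 := hsb.ne'
    field_simp
    ring
  rw [hpeq]
  exact hQconv hrQ hqQ ha'0 hb'0 hab'
end

section
/- Let Q ⊆ (ℝ_{≥0})^n be a compact convex set containing a point λ_n e_n with λ_n > 0, let Q⁰ = conv(Q ∪ {0}), and let σ, σ⁰ denote the upper envelope functions (with respect to the last coordinate) of Q and Q⁰ on their common projection π(Q) = π(Q⁰) to the first n−1 coordinates. Then σ⁰ = σ. -/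
/-- `ℝ^n` modeled as `ℝ^{n-1} × ℝ`, with `π = Prod.fst` the projection onto the
first `n-1` coordinates and the last coordinate `Prod.snd`. -/
theorem stmt_11 {m : ℕ} (Q : Set ((Fin m → ℝ) × ℝ))
    (hQcomp : IsCompact Q) (hQconv : Convex ℝ Q)
    (hQnonneg : ∀ q ∈ Q, (∀ i, 0 ≤ q.1 i) ∧ 0 ≤ q.2)
    (lamn : ℝ) (hlamn : 0 < lamn) (hlast : ((0 : Fin m → ℝ), lamn) ∈ Q)
    (Q0 : Set ((Fin m → ℝ) × ℝ)) (hQ0 : Q0 = convexHull ℝ (Q ∪ {0}))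
    (hproj : Prod.fst '' Q = Prod.fst '' Q0)
    (σ σ0 : (Fin m → ℝ) → ℝ)
    (hσ : ∀ x ∈ Prod.fst '' Q, IsGreatest {t : ℝ | (x, t) ∈ Q} (σ x))
    (hσ0 : ∀ x ∈ Prod.fst '' Q, IsGreatest {t : ℝ | (x, t) ∈ Q0} (σ0 x)) :
    ∀ x ∈ Prod.fst '' Q, σ0 x = σ x := by
  intro x hx
  obtain ⟨hσmem, hσub⟩ := hσ x hx
  obtain ⟨hσ0mem, hσ0ub⟩ := hσ0 x hx
  have hQsub : Q ⊆ Q0 := by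
    rw [hQ0]
    exact (Set.subset_union_left).trans (subset_convexHull ℝ _)
  apply le_antisymm
  · -- σ0 x ≤ σ x
    have hmem : ((x, σ0 x) : (Fin m → ℝ) × ℝ) ∈ Q0 := hσ0mem
    rw [hQ0, Set.union_singleton,
        convexHull_insert ⟨_, hlast⟩, hQconv.convexHull_eq] at hmem
    rw [mem_convexJoin] at hmem
    obtain ⟨o, ho, z, hz, hseg⟩ := hmem
    rw [Set.mem_singleton_iff] at ho
    subst ho
    obtain ⟨a, b, ha, hb, hab, heq⟩ := hseg
    simp only [smul_zero, zero_add] at heq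
    -- (x, σ0 x) = b • z
    have hb1 : b ≤ 1 := by linarith
    have hcomb : b • z + (1 - b) • ((0 : Fin m → ℝ), lamn) ∈ Q :=
      hQconv hz hlast hb (by linarith) (by ring)
    have hfst : (b • z + (1 - b) • ((0 : Fin m → ℝ), lamn)).1 = x := by
      have : (b • z).1 = x := by rw [heq]
      simpa [Prod.smul_def] using this
    have hsnd : (b • z + (1 - b) • ((0 : Fin m → ℝ), lamn)).2
        = b * z.2 + (1 - b) * lamn := by simp [Prod.smul_def]
    have hval : σ0 x = b * z.2 := by
      have : (b • z).2 = σ0 x := by rw [heq]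
      simpa [Prod.smul_def] using this.symm
    have hmemQ : (x, b * z.2 + (1 - b) * lamn) ∈ Q := by
      have := hcomb
      rwa [show (b • z + (1 - b) • ((0 : Fin m → ℝ), lamn))
          = (x, b * z.2 + (1 - b) * lamn) from Prod.ext hfst hsnd] at this
    have hle : b * z.2 + (1 - b) * lamn ≤ σ x := hσub hmemQ
    nlinarith
  · exact hσ0ub (hQsub hσmem)
end
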